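/- If (X_n) and (Y_n) are two independent Galton-Watson processes with the same reproduction law ν (and initial laws μ₁, μ₂ respectively), then (X_n + Y_n) is a Galton-Watson process with reproduction law ν and initial law μ₁ * μ₂ (the convolution). -/

import Mathlib

open MeasureTheory ProbabilityTheory Filter ENNReal
noncomputable section

section Helpers
variable {Ω : Type*} {α : Type*} [MeasurableSpace α]

lemma my_measurable_comp_nat {m : MeasurableSpace Ω}
    {g : Ω → ℕ} (hg : Measurable[m] g) {F : ℕ → Ω → α} (hF : ∀ j, Measurable[m] (F j)) :
    Measurable[m] (fun ω => F (g ω) ω) := by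
  intro s hs
  have h : (fun ω => F (g ω) ω) ⁻¹' s = ⋃ j, (g ⁻¹' {j} ∩ F j ⁻¹' s) := by
    ext ω
    simp only [Set.mem_preimage, Set.mem_iUnion, Set.mem_inter_iff, Set.mem_singleton_iff]
    constructor
    · intro h; exact ⟨g ω, rfl, h⟩
    · rintro ⟨j, rfl, h⟩; exact h
  rw [h]
  exact MeasurableSet.iUnion fun j => (hg (measurableSet_singleton j)).inter (hF j hs)

lemma my_measure_partition {m : MeasurableSpace Ω} (P : Measure Ω) {g : Ω → ℕ}
    (hg : Measurable g) {s : Set Ω} (hs : MeasurableSet s) :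
    P s = ∑' j, P (s ∩ g ⁻¹' {j}) := by
  rw [← measure_iUnion]
  · congr 1; ext ω; simp
  · intro i j hij
    simp only [Function.onFun, Set.disjoint_left]
    rintro ω ⟨-, hi⟩ ⟨-, hj⟩
    exact hij (by simp_all)
  · exact fun j => hs.inter (hg (measurableSet_singleton j))

lemma my_comap_nat_eq_generateFrom (f : Ω → ℕ) :
    MeasurableSpace.comap f inferInstance =
      MeasurableSpace.generateFrom (Set.range fun k => f ⁻¹' {k}) := by
  apply le_antisymm
  · rintro _ ⟨A, -, rfl⟩
    have h : f ⁻¹' A = ⋃ k ∈ A, f ⁻¹' {k} := by ext; simp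
    rw [h]
    exact MeasurableSet.biUnion A.to_countable fun k _ =>
      MeasurableSpace.measurableSet_generateFrom ⟨k, rfl⟩
  · exact MeasurableSpace.generateFrom_le (by rintro _ ⟨k, rfl⟩; exact ⟨{k}, trivial, rfl⟩)

lemma my_iIndepFun_nat_of_singletons {ι : Type*} {m : MeasurableSpace Ω} (P : Measure Ω)
    [IsProbabilityMeasure P] (f : ι → Ω → ℕ) (hf : ∀ i, Measurable (f i))
    (h : ∀ (S : Finset ι) (a : ι → ℕ),
      P (⋂ i ∈ S, f i ⁻¹' {a i}) = ∏ i ∈ S, P (f i ⁻¹' {a i})) :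
    iIndepFun f P := by
  rw [iIndepFun_iff_iIndep]
  refine iIndepSets.iIndep (m := fun i => MeasurableSpace.comap (f i) inferInstance)
    (fun i => (hf i).comap_le)
    (fun i => Set.range fun k => f i ⁻¹' {k}) ?_ ?_ ?_
  · intro i
    rintro _ ⟨k, rfl⟩ _ ⟨l, rfl⟩ hne
    obtain ⟨ω, hω⟩ := hne
    have : k = l := by
      simp only [Set.mem_inter_iff, Set.mem_preimage, Set.mem_singleton_iff] at hω
      omega
    subst this
    exact ⟨k, by simp⟩
  · exact fun i => my_comap_nat_eq_generateFrom (f i)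
  · rw [iIndepSets_iff]
    intro S sets hsets
    have ha : ∀ i, ∃ k, i ∈ S → sets i = f i ⁻¹' {k} := by
      intro i
      by_cases hi : i ∈ S
      · obtain ⟨k, hk⟩ := hsets i hi
        exact ⟨k, fun _ => hk.symm⟩
      · exact ⟨0, fun h => absurd h hi⟩
    choose a hak using ha
    have h1 : (⋂ i ∈ S, sets i) = ⋂ i ∈ S, f i ⁻¹' {a i} :=
      Set.iInter₂_congr fun i hi => hak i hi
    have h2 : ∀ i ∈ S, P (sets i) = P (f i ⁻¹' {a i}) := fun i hi => by rw [hak i hi]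
    rw [h1, h (S := S) a, Finset.prod_congr rfl h2]

end Helpers

section Combine
variable {Ω : Type} [MeasurableSpace Ω]

lemma my_combine_indep (P : Measure Ω) [IsProbabilityMeasure P]
    (f1 f2 : Option (ℕ × ℕ) → Ω → ℕ)
    (h1 : iIndepFun f1 P)
    (h2 : iIndepFun f2 P)
    (hpair : IndepFun (fun ω o => f1 o ω) (fun ω o => f2 o ω) P) :
    iIndepFun
      (fun q : Bool × Option (ℕ × ℕ) => if q.1 then f1 q.2 else f2 q.2) P := by
  classical
  rw [iIndepFun_iff_measure_inter_preimage_eq_mul]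
  intro S sets hsets
  set W : Bool × Option (ℕ × ℕ) → Ω → ℕ := fun q => if q.1 then f1 q.2 else f2 q.2 with hW
  set St := S.filter (fun q => q.1 = true) with hSt
  set Sf := S.filter (fun q => ¬ q.1 = true) with hSf
  have hqt : ∀ q ∈ St, q.1 = true := fun q hq => (Finset.mem_filter.1 hq).2
  have hqf : ∀ q ∈ Sf, q.1 = false := fun q hq => by
    have := (Finset.mem_filter.1 hq).2; simp_all
  have hWt : ∀ q ∈ St, W q = f1 q.2 := fun q hq => by simp [hW, hqt q hq]
  have hWf : ∀ q ∈ Sf, W q = f2 q.2 := fun q hq => by simp [hW, hqf q hq]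
  -- split the intersection
  have hsplit : (⋂ q ∈ S, W q ⁻¹' sets q)
      = (⋂ q ∈ St, f1 q.2 ⁻¹' sets q) ∩ (⋂ q ∈ Sf, f2 q.2 ⁻¹' sets q) := by
    ext ω
    simp only [Set.mem_iInter, Set.mem_inter_iff, Set.mem_preimage]
    constructor
    · intro h
      refine ⟨fun q hq => ?_, fun q hq => ?_⟩
      · have h2 := h q (Finset.filter_subset _ _ hq)
        rwa [hWt q hq] at h2
      · have h2 := h q (Finset.filter_subset _ _ hq)
        rwa [hWf q hq] at h2
    · rintro ⟨ht, hf⟩ q hq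
      by_cases hb : q.1 = true
      · have hq' : q ∈ St := Finset.mem_filter.2 ⟨hq, hb⟩
        rw [hWt q hq']; exact ht q hq'
      · have hq' : q ∈ Sf := Finset.mem_filter.2 ⟨hq, hb⟩
        rw [hWf q hq']; exact hf q hq'
  -- express each part as a preimage under the vector map
  have inj1 : Set.InjOn (fun q : Bool × Option (ℕ × ℕ) => q.2) St := by
    intro q hq q' hq' h
    exact Prod.ext ((hqt q hq).trans (hqt q' hq').symm) h
  have inj2 : Set.InjOn (fun q : Bool × Option (ℕ × ℕ) => q.2) Sf := by
    intro q hq q' hq' h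
    exact Prod.ext ((hqf q hq).trans (hqf q' hq').symm) h
  have hre1 : (⋂ q ∈ St, f1 q.2 ⁻¹' sets q)
      = ⋂ o ∈ St.image Prod.snd, f1 o ⁻¹' sets (true, o) := by
    rw [Finset.set_biInter_finset_image]
    exact Set.iInter₂_congr fun q hq => by
      rw [show (true, q.2) = q from Prod.ext (hqt q hq).symm rfl]
  have hre2 : (⋂ q ∈ Sf, f2 q.2 ⁻¹' sets q)
      = ⋂ o ∈ Sf.image Prod.snd, f2 o ⁻¹' sets (false, o) := by
    rw [Finset.set_biInter_finset_image]
    exact Set.iInter₂_congr fun q hq => by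
      rw [show (false, q.2) = q from Prod.ext (hqf q hq).symm rfl]
  set C1 : Set (Option (ℕ × ℕ) → ℕ) :=
    ⋂ o ∈ St.image Prod.snd, (fun g => g o) ⁻¹' sets (true, o) with hC1
  set C2 : Set (Option (ℕ × ℕ) → ℕ) :=
    ⋂ o ∈ Sf.image Prod.snd, (fun g => g o) ⁻¹' sets (false, o) with hC2
  have hC1m : MeasurableSet C1 :=
    Finset.measurableSet_biInter _ fun o _ =>
      (measurable_pi_apply o) .of_discrete
  have hC2m : MeasurableSet C2 :=
    Finset.measurableSet_biInter _ fun o _ =>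
      (measurable_pi_apply o) .of_discrete
  have hpre1 : (fun ω (o : Option (ℕ × ℕ)) => f1 o ω) ⁻¹' C1
      = ⋂ o ∈ St.image Prod.snd, f1 o ⁻¹' sets (true, o) := by
    ext ω; simp [hC1]
  have hpre2 : (fun ω (o : Option (ℕ × ℕ)) => f2 o ω) ⁻¹' C2
      = ⋂ o ∈ Sf.image Prod.snd, f2 o ⁻¹' sets (false, o) := by
    ext ω; simp [hC2]
  have hmul := hpair.measure_inter_preimage_eq_mul C1 C2 hC1m hC2m
  rw [hpre1, hpre2] at hmul
  -- compute the two factors by the within-group independence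
  have hgrp1 : P (⋂ o ∈ St.image Prod.snd, f1 o ⁻¹' sets (true, o))
      = ∏ q ∈ St, P (f1 q.2 ⁻¹' sets q) := by
    rw [h1.measure_inter_preimage_eq_mul (St.image Prod.snd)
      (sets := fun o => sets (true, o)) (fun o _ => .of_discrete)]
    rw [Finset.prod_image (fun q hq q' hq' h => inj1 hq hq' h)]
    exact Finset.prod_congr rfl fun q hq => by
      rw [show (true, q.2) = q from Prod.ext (hqt q hq).symm rfl]
  have hgrp2 : P (⋂ o ∈ Sf.image Prod.snd, f2 o ⁻¹' sets (false, o))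
      = ∏ q ∈ Sf, P (f2 q.2 ⁻¹' sets q) := by
    rw [h2.measure_inter_preimage_eq_mul (Sf.image Prod.snd)
      (sets := fun o => sets (false, o)) (fun o _ => .of_discrete)]
    rw [Finset.prod_image (fun q hq q' hq' h => inj2 hq hq' h)]
    exact Finset.prod_congr rfl fun q hq => by
      rw [show (false, q.2) = q from Prod.ext (hqf q hq).symm rfl]
  rw [hsplit, hre1, hre2, hmul, hgrp1, hgrp2]
  rw [← Finset.prod_filter_mul_prod_filter_not S (fun q => q.1 = true)]
  congr 1
  · exact (Finset.prod_congr rfl fun q hq => by simp [hqt q hq]).symm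
  · exact (Finset.prod_congr rfl fun q hq => by simp [hqf q hq]).symm

end Combine

section GW
variable {Ω : Type} [mΩ : MeasurableSpace Ω]

def pastIdx (N : ℕ) : Set (Bool × Option (ℕ × ℕ)) := {q | ∀ p ∈ q.2, p.1 < N}
def futIdx (N : ℕ) : Set (Bool × Option (ℕ × ℕ)) := {q | ∃ p ∈ q.2, N ≤ p.1}

lemma pastIdx_mono {N N' : ℕ} (h : N ≤ N') : pastIdx N ⊆ pastIdx N' := by
  intro q hq p hp
  exact lt_of_lt_of_le (hq p hp) h

lemma pastIdx_disjoint_futIdx (N : ℕ) : Disjoint (pastIdx N) (futIdx N) := by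
  rw [Set.disjoint_left]
  rintro q hq ⟨p, hp, hNp⟩
  exact absurd (hq p hp) (by omega)

def pastSA (W : Bool × Option (ℕ × ℕ) → Ω → ℕ) (N : ℕ) : MeasurableSpace Ω :=
  ⨆ q ∈ pastIdx N, MeasurableSpace.comap (W q) inferInstance

def futSA (W : Bool × Option (ℕ × ℕ) → Ω → ℕ) (N : ℕ) : MeasurableSpace Ω :=
  ⨆ q ∈ futIdx N, MeasurableSpace.comap (W q) inferInstance

variable {W : Bool × Option (ℕ × ℕ) → Ω → ℕ}

lemma pastSA_le (hWmeas : ∀ q, Measurable (W q)) (N : ℕ) : pastSA W N ≤ mΩ :=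
  iSup₂_le fun q _ => (hWmeas q).comap_le

lemma pastSA_mono {N N' : ℕ} (h : N ≤ N') : pastSA W N ≤ pastSA W N' := by
  apply iSup₂_le
  intro q hq
  exact le_iSup₂ (f := fun q _ => MeasurableSpace.comap (W q) inferInstance) q
    (pastIdx_mono h hq)

lemma measurable_pastSA {N : ℕ} {q : Bool × Option (ℕ × ℕ)} (hq : q ∈ pastIdx N) :
    Measurable[pastSA W N] (W q) := by
  rw [measurable_iff_comap_le]
  exact le_iSup₂ (f := fun q _ => MeasurableSpace.comap (W q) inferInstance) q hq

lemma measurableSet_futSA {N : ℕ} {q : Bool × Option (ℕ × ℕ)} (hq : q ∈ futIdx N)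
    (s : Set ℕ) : MeasurableSet[futSA W N] (W q ⁻¹' s) := by
  have h : MeasurableSpace.comap (W q) inferInstance ≤ futSA W N :=
    le_iSup₂ (f := fun q _ => MeasurableSpace.comap (W q) inferInstance) q hq
  exact h _ ⟨s, .of_discrete, rfl⟩

lemma indep_past_fut (P : Measure Ω) (hWmeas : ∀ q, Measurable (W q))
    (hW : iIndepFun W P) (N : ℕ) :
    Indep (pastSA W N) (futSA W N) P :=
  indep_iSup_of_disjoint (fun q => (hWmeas q).comap_le) hW.iIndep
    (pastIdx_disjoint_futIdx N)

/-- Key independence consequence: a past event and a finite collection of future raw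
singleton events. -/
lemma past_indep_raw (P : Measure Ω) [IsProbabilityMeasure P]
    (hWmeas : ∀ q, Measurable (W q))
    (hW : iIndepFun W P) (N : ℕ)
    {D : Set Ω} (hD : MeasurableSet[pastSA W N] D)
    (R : Finset (Bool × Option (ℕ × ℕ))) (hR : ∀ q ∈ R, q ∈ futIdx N)
    (c : Bool × Option (ℕ × ℕ) → ℕ) :
    P (D ∩ ⋂ q ∈ R, W q ⁻¹' {c q}) = P D * ∏ q ∈ R, P (W q ⁻¹' {c q}) := by
  have hfut : MeasurableSet[futSA W N] (⋂ q ∈ R, W q ⁻¹' {c q}) :=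
    Finset.measurableSet_biInter _ fun q hq => measurableSet_futSA (hR q hq) _
  have hindep := indep_past_fut P hWmeas hW N
  rw [Indep_iff] at hindep
  rw [hindep D _ hD hfut]
  congr 1
  exact hW.measure_inter_preimage_eq_mul R (sets := fun q => {c q})
    (fun q _ => .of_discrete)

lemma measurable_Y1_past (Y1 : ℕ → Ω → ℕ)
    (hY10 : Y1 0 = W (true, none))
    (hY1rec : ∀ n ω, Y1 (n + 1) ω = ∑ i ∈ Finset.range (Y1 n ω), W (true, some (n, i)) ω)
    (N : ℕ) : Measurable[pastSA W N] (Y1 N) := by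
  induction N with
  | zero =>
    rw [hY10]
    exact measurable_pastSA (by intro p hp; simp [Option.mem_def] at hp)
  | succ n ih =>
    have h : Y1 (n + 1) = fun ω =>
        (fun j ω' => ∑ i ∈ Finset.range j, W (true, some (n, i)) ω') (Y1 n ω) ω :=
      funext fun ω => hY1rec n ω
    rw [h]
    refine my_measurable_comp_nat (g := Y1 n)
      (F := fun j ω' => ∑ i ∈ Finset.range j, W (true, some (n, i)) ω') ?_ ?_
    · exact (ih).mono (pastSA_mono (Nat.le_succ n)) le_rfl
    · intro j
      apply Finset.measurable_sum
      intro i _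
      exact measurable_pastSA (by
        intro p hp
        rw [Option.mem_def, Option.some_inj] at hp
        subst hp
        exact Nat.lt_succ_self n)

end GW

lemma GW_main {Ω : Type} [mΩ : MeasurableSpace Ω] (P : Measure Ω) [IsProbabilityMeasure P]
    (ν : Measure ℕ) [IsProbabilityMeasure ν]
    (W : Bool × Option (ℕ × ℕ) → Ω → ℕ)
    (hWmeas : ∀ q, Measurable (W q))
    (hW : iIndepFun W P)
    (hWν : ∀ (bo : Bool) (n i c : ℕ), P (W (bo, some (n, i)) ⁻¹' {c}) = ν {c})
    (Y1 : ℕ → Ω → ℕ)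
    (hY10 : Y1 0 = W (true, none))
    (hY1rec : ∀ n ω, Y1 (n + 1) ω = ∑ i ∈ Finset.range (Y1 n ω), W (true, some (n, i)) ω)
    (X' : ℕ → ℕ → Ω → ℕ)
    (hX'meas : ∀ n i, Measurable (X' n i))
    (hX' : ∀ n i ω, X' n i ω =
      if i < Y1 n ω then W (true, some (n, i)) ω else W (false, some (n, i - Y1 n ω)) ω)
    (k : ℕ) :
    ∀ (T : Finset (ℕ × ℕ)), T.card ≤ k → ∀ (N : ℕ), (∀ p ∈ T, N ≤ p.1) →
      ∀ (D : Set Ω), MeasurableSet[pastSA W N] D → ∀ (b : ℕ × ℕ → ℕ),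
      P (D ∩ ⋂ p ∈ T, X' p.1 p.2 ⁻¹' {b p}) = P D * ∏ p ∈ T, ν {b p} := by
  classical
  induction k with
  | zero =>
    intro T hT N _ D hD b
    rw [Nat.le_zero, Finset.card_eq_zero] at hT
    subst hT
    simp
  | succ k ih =>
    intro T hTcard N hTN D hD b
    rcases T.eq_empty_or_nonempty with rfl | hTne
    · simp
    have hne : (T.image Prod.fst).Nonempty := hTne.image _
    set M := (T.image Prod.fst).min' hne with hM
    obtain ⟨pM, hpM, hpMfst⟩ := Finset.mem_image.1 ((T.image Prod.fst).min'_mem hne)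
    have hNM : N ≤ M := by rw [hM, ← hpMfst]; exact hTN pM hpM
    have hMle : ∀ p ∈ T, M ≤ p.1 := fun p hp =>
      Finset.min'_le _ _ (Finset.mem_image_of_mem _ hp)
    set TM := T.filter (fun p => p.1 = M) with hTM
    set T' := T.filter (fun p => ¬ p.1 = M) with hT'
    have hTMne : TM.Nonempty := ⟨pM, Finset.mem_filter.2 ⟨hpM, hpMfst⟩⟩
    have hT'card : T'.card ≤ k := by
      have hss : T' ⊂ T := Finset.filter_ssubset.2 ⟨pM, hpM, by simp [hpMfst, hM]⟩
      have := Finset.card_lt_card hss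
      omega
    have hT'N : ∀ p ∈ T', M + 1 ≤ p.1 := fun p hp => by
      have h1 := hMle p (Finset.filter_subset _ _ hp)
      have h2 := (Finset.mem_filter.1 hp).2
      omega
    -- index relabeling at level M
    set idx : ℕ → ℕ → Bool × Option (ℕ × ℕ) := fun j i =>
      if i < j then (true, some (M, i)) else (false, some (M, i - j)) with hidx
    have hidx2 : ∀ j i, ∃ bb ii, idx j i = (bb, some (M, ii)) := by
      intro j i
      by_cases h : i < j
      · exact ⟨true, i, by simp [hidx, h]⟩
      · exact ⟨false, i - j, by simp [hidx, h]⟩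
    have hidxpast : ∀ j i, idx j i ∈ pastIdx (M + 1) := by
      intro j i
      obtain ⟨bb, ii, h⟩ := hidx2 j i
      rw [h]
      intro p hp
      rw [Option.mem_def, Option.some_inj] at hp
      subst hp
      exact Nat.lt_succ_self M
    have hidxfut : ∀ j i, idx j i ∈ futIdx M := by
      intro j i
      obtain ⟨bb, ii, h⟩ := hidx2 j i
      rw [h]
      exact ⟨(M, ii), rfl, le_rfl⟩
    have hidxν : ∀ j i c, P (W (idx j i) ⁻¹' {c}) = ν {c} := by
      intro j i c
      obtain ⟨bb, ii, h⟩ := hidx2 j i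
      rw [h, hWν]
    -- basic measurability
    have hDm : MeasurableSet D := pastSA_le hWmeas N D hD
    set A := ⋂ p ∈ T, X' p.1 p.2 ⁻¹' {b p} with hA
    have hAm : MeasurableSet A :=
      Finset.measurableSet_biInter _ fun p _ => hX'meas p.1 p.2 (measurableSet_singleton _)
    have hY1Mpast : Measurable[pastSA W M] (Y1 M) := measurable_Y1_past Y1 hY10 hY1rec M
    have hY1M : Measurable (Y1 M) := hY1Mpast.mono (pastSA_le hWmeas M) le_rfl
    -- the pointwise rewriting on {Y1 M = j}
    have hXW : ∀ j i ω, Y1 M ω = j → X' M i ω = W (idx j i) ω := by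
      intro j i ω hY
      rw [hX' M i ω, hY]
      by_cases h : i < j
      · simp [hidx, h]
      · simp [hidx, h]
    -- per-j event identity
    have hEj : ∀ j, (D ∩ A) ∩ Y1 M ⁻¹' {j}
        = ((D ∩ Y1 M ⁻¹' {j}) ∩ ⋂ p ∈ TM, W (idx j p.2) ⁻¹' {b p})
          ∩ ⋂ p ∈ T', X' p.1 p.2 ⁻¹' {b p} := by
      intro j
      ext ω
      simp only [hA, Set.mem_inter_iff, Set.mem_iInter, Set.mem_preimage,
        Set.mem_singleton_iff]
      constructor
      · rintro ⟨⟨hDω, hAω⟩, hYω⟩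
        refine ⟨⟨⟨hDω, hYω⟩, fun p hp => ?_⟩, fun p hp => hAω p (Finset.filter_subset _ _ hp)⟩
        have hp1 : p.1 = M := (Finset.mem_filter.1 hp).2
        have := hAω p (Finset.filter_subset _ _ hp)
        rw [hp1] at this
        rw [← hXW j p.2 ω hYω]
        exact this
      · rintro ⟨⟨⟨hDω, hYω⟩, hTMω⟩, hT'ω⟩
        refine ⟨⟨hDω, fun p hp => ?_⟩, hYω⟩
        by_cases hp1 : p.1 = M
        · have hp' : p ∈ TM := Finset.mem_filter.2 ⟨hp, hp1⟩
          rw [hp1, hXW j p.2 ω hYω]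
          exact hTMω p hp'
        · exact hT'ω p (Finset.mem_filter.2 ⟨hp, hp1⟩)
    -- measurability for the IH application
    have hD''meas : ∀ j, MeasurableSet[pastSA W (M + 1)]
        ((D ∩ Y1 M ⁻¹' {j}) ∩ ⋂ p ∈ TM, W (idx j p.2) ⁻¹' {b p}) := by
      intro j
      refine MeasurableSet.inter (MeasurableSet.inter ?_ ?_) ?_
      · exact pastSA_mono (by omega) D hD
      · exact (hY1Mpast.mono (pastSA_mono (Nat.le_succ M)) le_rfl)
          (measurableSet_singleton j)
      · exact Finset.measurableSet_biInter _ fun p _ =>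
          measurable_pastSA (hidxpast j p.2) (measurableSet_singleton _)
    -- the inner independence computation
    have hcfun : ∀ j, ∀ p ∈ TM,
        (fun q : Bool × Option (ℕ × ℕ) =>
          Option.elim q.2 0 (fun p' => if q.1 then b (M, p'.2) else b (M, p'.2 + j)))
          (idx j p.2) = b p := by
      intro j p hp
      have hp1 : p.1 = M := (Finset.mem_filter.1 hp).2
      have hpp : p = (M, p.2) := Prod.ext hp1 rfl
      have hbp : b (M, p.2) = b p := congrArg b hpp.symm
      by_cases h : p.2 < j
      · simpa [hidx, h] using hbp
      · have hj : j ≤ p.2 := by omega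
        simpa [hidx, h, Nat.sub_add_cancel hj] using hbp
    have hinj : ∀ j, Set.InjOn (fun p : ℕ × ℕ => idx j p.2) TM := by
      intro j p hp p' hp' h
      have h1 : p.1 = M := (Finset.mem_filter.1 hp).2
      have h1' : p'.1 = M := (Finset.mem_filter.1 hp').2
      have h2 : p.2 = p'.2 := by
        by_cases ha : p.2 < j <;> by_cases hb : p'.2 < j <;>
          simp only [hidx, ha, hb, if_true, if_false, Prod.mk.injEq, Option.some_inj] at h <;>
          first
          | omega
          | (obtain ⟨h3, h4⟩ := h; simp_all)
      exact Prod.ext (h1.trans h1'.symm) h2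
    have hinner : ∀ j, P ((D ∩ Y1 M ⁻¹' {j}) ∩ ⋂ p ∈ TM, W (idx j p.2) ⁻¹' {b p})
        = P (D ∩ Y1 M ⁻¹' {j}) * ∏ p ∈ TM, ν {b p} := by
      intro j
      set cfun : Bool × Option (ℕ × ℕ) → ℕ := fun q =>
        Option.elim q.2 0 (fun p' => if q.1 then b (M, p'.2) else b (M, p'.2 + j)) with hcf
      have hreidx : (⋂ q ∈ TM.image (fun p => idx j p.2), W q ⁻¹' {cfun q})
          = ⋂ p ∈ TM, W (idx j p.2) ⁻¹' {b p} := by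
        rw [Finset.set_biInter_finset_image]
        exact Set.iInter₂_congr fun p hp => by
          rw [show cfun (idx j p.2) = b p from hcfun j p hp]
      have hDj : MeasurableSet[pastSA W M] (D ∩ Y1 M ⁻¹' {j}) :=
        (pastSA_mono hNM D hD).inter (hY1Mpast (measurableSet_singleton j))
      have := past_indep_raw P hWmeas hW M hDj (TM.image (fun p => idx j p.2))
        (fun q hq => by
          obtain ⟨p, hp, rfl⟩ := Finset.mem_image.1 hq
          exact hidxfut j p.2) cfun
      rw [hreidx] at this
      rw [this]
      congr 1
      rw [Finset.prod_image fun p hp p' hp' h => hinj j hp hp' h]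
      exact Finset.prod_congr rfl fun p hp => by
        rw [show cfun (idx j p.2) = b p from hcfun j p hp, hidxν]
    -- assemble
    have hpart1 : P (D ∩ A) = ∑' j, P ((D ∩ A) ∩ Y1 M ⁻¹' {j}) :=
      my_measure_partition P hY1M (hDm.inter hAm)
    have hpart2 : P D = ∑' j, P (D ∩ Y1 M ⁻¹' {j}) :=
      my_measure_partition P hY1M hDm
    calc P (D ∩ A) = ∑' j, P ((D ∩ A) ∩ Y1 M ⁻¹' {j}) := hpart1
      _ = ∑' j, P (D ∩ Y1 M ⁻¹' {j}) * ((∏ p ∈ TM, ν {b p}) * ∏ p ∈ T', ν {b p}) := by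
          refine tsum_congr fun j => ?_
          rw [hEj j, ih T' hT'card (M + 1) hT'N _ (hD''meas j) b, hinner j, mul_assoc]
      _ = (∑' j, P (D ∩ Y1 M ⁻¹' {j})) * ((∏ p ∈ TM, ν {b p}) * ∏ p ∈ T', ν {b p}) :=
          ENNReal.tsum_mul_right
      _ = P D * ∏ p ∈ T, ν {b p} := by
          rw [← hpart2, hTM, hT', Finset.prod_filter_mul_prod_filter_not]

/-- A Galton–Watson process with random initial value `Y 0` of law `μ0`,
independent of the i.i.d. reproduction variables `X n i` of law `ν`. -/
def IsGW0 {Ω : Type} [MeasurableSpace Ω] (P : Measure Ω) (ν μ0 : Measure ℕ)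
    (X : ℕ → ℕ → Ω → ℕ) (Y : ℕ → Ω → ℕ) : Prop :=
  Measurable (Y 0) ∧ (∀ n i, Measurable (X n i)) ∧
  iIndepFun
    (fun o : Option (ℕ × ℕ) => o.elim (Y 0) (fun p => X p.1 p.2)) P ∧
  (∀ n i, Measure.map (X n i) P = ν) ∧
  Measure.map (Y 0) P = μ0 ∧
  ∀ n ω, Y (n + 1) ω = ∑ i ∈ Finset.range (Y n ω), X n i ω

set_option maxHeartbeats 1000000 in
/-- The sum of two independent Galton–Watson processes with the same reproduction
law ν is a Galton–Watson process with reproduction law ν and initial law μ₁ * μ₂. -/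
theorem stmt2 {Ω : Type} [MeasurableSpace Ω] (P : Measure Ω) [IsProbabilityMeasure P]
    (ν μ1 μ2 : Measure ℕ) [IsProbabilityMeasure ν] [IsProbabilityMeasure μ1]
    [IsProbabilityMeasure μ2]
    (X1 X2 : ℕ → ℕ → Ω → ℕ) (Y1 Y2 : ℕ → Ω → ℕ)
    (h1 : IsGW0 P ν μ1 X1 Y1) (h2 : IsGW0 P ν μ2 X2 Y2)
    (hindep : iIndepFun
      (fun b : Bool => fun ω => fun o : Option (ℕ × ℕ) =>
        if b then (o.elim (Y1 0) fun p => X1 p.1 p.2) ω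
        else (o.elim (Y2 0) fun p => X2 p.1 p.2) ω) P) :
    ∃ (Ω' : Type) (_ : MeasurableSpace Ω') (P' : Measure Ω')
      (_ : IsProbabilityMeasure P') (X' : ℕ → ℕ → Ω' → ℕ) (Z : ℕ → Ω' → ℕ),
      IsGW0 P' ν (Measure.map (fun p : ℕ × ℕ => p.1 + p.2) (μ1.prod μ2)) X' Z ∧
      Measure.map (fun ω (n : ℕ) => Y1 n ω + Y2 n ω) P
        = Measure.map (fun ω (n : ℕ) => Z n ω) P' := by
  classical
  obtain ⟨hY1m, hX1m, hI1, hX1law, hY1law, hrec1⟩ := h1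
  obtain ⟨hY2m, hX2m, hI2, hX2law, hY2law, hrec2⟩ := h2
  set f1 : Option (ℕ × ℕ) → Ω → ℕ := fun o => o.elim (Y1 0) (fun p => X1 p.1 p.2) with hf1
  set f2 : Option (ℕ × ℕ) → Ω → ℕ := fun o => o.elim (Y2 0) (fun p => X2 p.1 p.2) with hf2
  set W : Bool × Option (ℕ × ℕ) → Ω → ℕ := fun q => if q.1 then f1 q.2 else f2 q.2 with hWdef
  have hf1meas : ∀ o, Measurable (f1 o) := by
    rintro (_ | p)
    · exact hY1m
    · exact hX1m p.1 p.2
  have hf2meas : ∀ o, Measurable (f2 o) := by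
    rintro (_ | p)
    · exact hY2m
    · exact hX2m p.1 p.2
  have hWmeas : ∀ q, Measurable (W q) := by
    rintro ⟨b, o⟩
    cases b
    · simpa [hWdef] using hf2meas o
    · simpa [hWdef] using hf1meas o
  -- pair independence
  have hpair : IndepFun (fun ω (o : Option (ℕ × ℕ)) => f1 o ω)
      (fun ω (o : Option (ℕ × ℕ)) => f2 o ω) P := by
    have h := hindep.indepFun (show (true : Bool) ≠ false by simp)
    simpa [hf1, hf2] using h
  have hW : iIndepFun W P :=
    my_combine_indep P f1 f2 hI1 hI2 hpair
  -- laws of the raw variables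
  have hX1law' : ∀ n i c, P (X1 n i ⁻¹' {c}) = ν {c} := fun n i c => by
    rw [← hX1law n i, Measure.map_apply (hX1m n i) (measurableSet_singleton c)]
  have hX2law' : ∀ n i c, P (X2 n i ⁻¹' {c}) = ν {c} := fun n i c => by
    rw [← hX2law n i, Measure.map_apply (hX2m n i) (measurableSet_singleton c)]
  have hY1law' : ∀ j, P (Y1 0 ⁻¹' {j}) = μ1 {j} := fun j => by
    rw [← hY1law, Measure.map_apply hY1m (measurableSet_singleton j)]
  have hY2law' : ∀ j, P (Y2 0 ⁻¹' {j}) = μ2 {j} := fun j => by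
    rw [← hY2law, Measure.map_apply hY2m (measurableSet_singleton j)]
  have hWν : ∀ (bo : Bool) (n i c : ℕ), P (W (bo, some (n, i)) ⁻¹' {c}) = ν {c} := by
    intro bo n i c
    cases bo
    · simpa [hWdef, hf2] using hX2law' n i c
    · simpa [hWdef, hf1] using hX1law' n i c
  have hY10 : Y1 0 = W (true, none) := by simp [hWdef, hf1]
  have hY20 : Y2 0 = W (false, none) := by simp [hWdef, hf2]
  have hY1rec' : ∀ n ω, Y1 (n + 1) ω = ∑ i ∈ Finset.range (Y1 n ω), W (true, some (n, i)) ω := by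
    intro n ω
    rw [hrec1 n ω]
    exact Finset.sum_congr rfl fun i _ => by simp [hWdef, hf1]
  -- the interleaved reproduction variables and the sum process
  set X' : ℕ → ℕ → Ω → ℕ := fun n i ω =>
    if i < Y1 n ω then X1 n i ω else X2 n (i - Y1 n ω) ω with hX'def
  set Z : ℕ → Ω → ℕ := fun n ω => Y1 n ω + Y2 n ω with hZdef
  have hX'W : ∀ n i ω, X' n i ω = if i < Y1 n ω then W (true, some (n, i)) ω
      else W (false, some (n, i - Y1 n ω)) ω := by
    intro n i ω
    by_cases h : i < Y1 n ω <;> simp [hX'def, hWdef, hf1, hf2, h]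
  have hY1meas : ∀ n, Measurable (Y1 n) := fun n =>
    (measurable_Y1_past Y1 hY10 hY1rec' n).mono (pastSA_le hWmeas n) le_rfl
  have hX'meas : ∀ n i, Measurable (X' n i) := by
    intro n i
    have h : X' n i = fun ω =>
        (fun j ω' => if i < j then X1 n i ω' else X2 n (i - j) ω') (Y1 n ω) ω := by
      funext ω; simp [hX'def]
    rw [h]
    refine my_measurable_comp_nat (g := Y1 n)
      (F := fun j ω' => if i < j then X1 n i ω' else X2 n (i - j) ω') (hY1meas n) ?_
    intro j
    by_cases hj : i < j
    · simpa [hj] using hX1m n i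
    · simpa [hj] using hX2m n (i - j)
  -- the key factorization
  have hkey : ∀ (T : Finset (ℕ × ℕ)) (D : Set Ω), MeasurableSet[pastSA W 0] D →
      ∀ (b : ℕ × ℕ → ℕ),
      P (D ∩ ⋂ p ∈ T, X' p.1 p.2 ⁻¹' {b p}) = P D * ∏ p ∈ T, ν {b p} :=
    fun T D hD b => GW_main P ν W hWmeas hW hWν Y1 hY10 hY1rec' X' hX'meas hX'W
      T.card T le_rfl 0 (fun p _ => Nat.zero_le _) D hD b
  have hY10past : Measurable[pastSA W 0] (Y1 0) := by
    rw [hY10]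
    exact measurable_pastSA (by intro p hp; simp [Option.mem_def] at hp)
  have hY20past : Measurable[pastSA W 0] (Y2 0) := by
    rw [hY20]
    exact measurable_pastSA (by intro p hp; simp [Option.mem_def] at hp)
  have hX'law : ∀ n i c, P (X' n i ⁻¹' {c}) = ν {c} := by
    intro n i c
    have h := hkey {(n, i)} Set.univ MeasurableSet.univ (fun _ => c)
    simpa using h
  -- the initial distribution of the sum
  set m12 : ℕ → ℝ≥0∞ := fun c => ∑ j ∈ Finset.range (c + 1), μ1 {j} * μ2 {(c - j : ℕ)}
    with hm12
  have hpairlaw : ∀ j l, P (Y1 0 ⁻¹' {j} ∩ Y2 0 ⁻¹' {l}) = μ1 {j} * μ2 {l} := by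
    intro j l
    have h := (hW.indepFun (show ((true, none) : Bool × Option (ℕ × ℕ)) ≠ (false, none)
      by simp)).measure_inter_preimage_eq_mul (s := {j}) (t := {l}) .of_discrete .of_discrete
    rw [← hY10, ← hY20] at h
    rw [h, hY1law', hY2law']
  have hZsplit : ∀ c (B : Set Ω),
      Z 0 ⁻¹' {c} ∩ B = ⋃ j ∈ Finset.range (c + 1), (Y1 0 ⁻¹' {j} ∩ Y2 0 ⁻¹' {c - j} ∩ B) := by
    intro c B
    ext ω
    simp only [Set.mem_inter_iff, Set.mem_preimage, Set.mem_singleton_iff, Set.mem_iUnion,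
      Finset.mem_range, hZdef]
    constructor
    · rintro ⟨hc, hB⟩
      exact ⟨Y1 0 ω, by omega, ⟨⟨rfl, by omega⟩, hB⟩⟩
    · rintro ⟨j, hj, ⟨⟨h1', h2'⟩, hB⟩⟩
      exact ⟨by omega, hB⟩
  have hjoint : ∀ c (T : Finset (ℕ × ℕ)) (b : ℕ × ℕ → ℕ),
      P (Z 0 ⁻¹' {c} ∩ ⋂ p ∈ T, X' p.1 p.2 ⁻¹' {b p}) = m12 c * ∏ p ∈ T, ν {b p} := by
    intro c T b
    rw [hZsplit c _]
    rw [measure_biUnion_finset ?disj ?meas]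
    case disj =>
      intro j hj l hl hjl
      simp only [Set.disjoint_left]
      rintro ω ⟨⟨hω1, -⟩, -⟩ ⟨⟨hω1', -⟩, -⟩
      simp only [Set.mem_preimage, Set.mem_singleton_iff] at hω1 hω1'
      exact hjl (by omega)
    case meas =>
      intro j _
      refine ((hY1meas 0 (measurableSet_singleton j)).inter
        (hY2m (measurableSet_singleton _))).inter ?_
      exact Finset.measurableSet_biInter _ fun p _ =>
        hX'meas p.1 p.2 (measurableSet_singleton _)
    have hterm : ∀ j ∈ Finset.range (c + 1),
        P (Y1 0 ⁻¹' {j} ∩ Y2 0 ⁻¹' {c - j} ∩ ⋂ p ∈ T, X' p.1 p.2 ⁻¹' {b p})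
          = (μ1 {j} * μ2 {(c - j : ℕ)}) * ∏ p ∈ T, ν {b p} := by
      intro j _
      have hD : MeasurableSet[pastSA W 0] (Y1 0 ⁻¹' {j} ∩ Y2 0 ⁻¹' {c - j}) :=
        (hY10past (measurableSet_singleton j)).inter (hY20past (measurableSet_singleton _))
      rw [hkey T _ hD b, hpairlaw]
    rw [Finset.sum_congr rfl hterm, ← Finset.sum_mul]
  have hZ0law : ∀ c, P (Z 0 ⁻¹' {c}) = m12 c := by
    intro c
    have h := hjoint c ∅ (fun _ => 0)
    simpa using h
  -- identify m12 with the convolution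
  have haddmeas : Measurable (fun p : ℕ × ℕ => p.1 + p.2) := .of_discrete
  have hconv : ∀ c, Measure.map (fun p : ℕ × ℕ => p.1 + p.2) (μ1.prod μ2) {c} = m12 c := by
    intro c
    rw [Measure.map_apply haddmeas (measurableSet_singleton c)]
    have hset : (fun p : ℕ × ℕ => p.1 + p.2) ⁻¹' {c}
        = ⋃ j ∈ Finset.range (c + 1), ({j} : Set ℕ) ×ˢ ({(c - j : ℕ)} : Set ℕ) := by
      ext ⟨x, y⟩
      simp only [Set.mem_preimage, Set.mem_singleton_iff, Set.mem_iUnion, Finset.mem_range,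
        Set.mem_prod]
      constructor
      · rintro rfl
        exact ⟨x, by omega, rfl, by omega⟩
      · rintro ⟨j, hj, rfl, rfl⟩
        omega
    rw [hset, measure_biUnion_finset ?disj2 ?meas2]
    case disj2 =>
      intro j hj l hl hjl
      simp only [Set.disjoint_left, Set.mem_prod, Set.mem_singleton_iff]
      rintro ⟨x, y⟩ ⟨rfl, -⟩ ⟨h, -⟩
      exact hjl h
    case meas2 =>
      intro j _
      exact .of_discrete
    exact Finset.sum_congr rfl fun j _ => by rw [Measure.prod_prod]
  -- the option-indexed family is independent
  set Fam : Option (ℕ × ℕ) → Ω → ℕ := fun o => o.elim (Z 0) (fun p => X' p.1 p.2) with hFam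
  have hFamMeas : ∀ o, Measurable (Fam o) := by
    rintro (_ | p)
    · exact (hY1meas 0).add hY2m
    · exact hX'meas p.1 p.2
  have hIndepFam : iIndepFun Fam P := by
    refine my_iIndepFun_nat_of_singletons P Fam hFamMeas ?_
    intro S a
    set T : Finset (ℕ × ℕ) := S.eraseNone with hT
    by_cases hnone : none ∈ S
    · have hSins : S = insert none (T.map Function.Embedding.some) := by
        ext o
        cases o with
        | none => simp [hnone]
        | some p => simp [hT, Finset.mem_eraseNone]
      have hinter : (⋂ o ∈ S, Fam o ⁻¹' {a o})
          = Z 0 ⁻¹' {a none} ∩ ⋂ p ∈ T, X' p.1 p.2 ⁻¹' {a (some p)} := by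
        ext ω
        simp only [Set.mem_iInter, Set.mem_inter_iff]
        constructor
        · intro h
          exact ⟨h none hnone, fun p hp => h (some p) (Finset.mem_eraseNone.1 hp)⟩
        · rintro ⟨hz, hx⟩ o ho
          cases o with
          | none => exact hz
          | some p => exact hx p (Finset.mem_eraseNone.2 ho)
      rw [hinter, hjoint (a none) T (fun p => a (some p))]
      rw [hSins, Finset.prod_insert (by simp), Finset.prod_map]
      have hz : P (Fam none ⁻¹' {a none}) = m12 (a none) := hZ0law (a none)
      rw [hz]
      congr 1
      exact Finset.prod_congr rfl fun p _ => (hX'law p.1 p.2 (a (some p))).symm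
    · have hSim : S = T.map Function.Embedding.some := by
        ext o
        cases o with
        | none => simp [hnone]
        | some p => simp [hT, Finset.mem_eraseNone]
      have hinter : (⋂ o ∈ S, Fam o ⁻¹' {a o})
          = ⋂ p ∈ T, X' p.1 p.2 ⁻¹' {a (some p)} := by
        ext ω
        simp only [Set.mem_iInter]
        constructor
        · intro h p hp
          exact h (some p) (Finset.mem_eraseNone.1 hp)
        · intro h o ho
          cases o with
          | none => exact absurd ho hnone
          | some p => exact h p (Finset.mem_eraseNone.2 ho)
      have h0 := hkey T Set.univ MeasurableSet.univ (fun p => a (some p))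
      rw [Set.univ_inter] at h0
      rw [hinter, h0, measure_univ, one_mul, hSim, Finset.prod_map]
      exact Finset.prod_congr rfl fun p _ => (hX'law p.1 p.2 (a (some p))).symm
  -- conclusion
  refine ⟨Ω, inferInstance, P, inferInstance, X', Z,
    ⟨?_, hX'meas, hIndepFam, ?_, ?_, ?_⟩, by rw [hZdef]⟩
  · exact (hY1meas 0).add hY2m
  · intro n i
    refine MeasureTheory.Measure.ext_of_singleton fun c => ?_
    rw [Measure.map_apply (hX'meas n i) (measurableSet_singleton c), hX'law]
  · refine MeasureTheory.Measure.ext_of_singleton fun c => ?_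
    rw [Measure.map_apply (show Measurable (Z 0) from (hY1meas 0).add hY2m) (measurableSet_singleton c), hconv]
    exact hZ0law c
  · intro n ω
    have ha : Z (n + 1) ω = (∑ i ∈ Finset.range (Y1 n ω), X1 n i ω)
        + ∑ i ∈ Finset.range (Y2 n ω), X2 n i ω := by
      simp only [hZdef]
      rw [hrec1 n ω, hrec2 n ω]
    rw [ha]
    simp only [hZdef]
    rw [Finset.range_add, Finset.sum_union (Finset.disjoint_range_addLeftEmbedding _ _),
      Finset.sum_map]
    congr 1
    · refine Finset.sum_congr rfl fun i hi => ?_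
      simp only [Finset.mem_range] at hi
      simp only [hX'def]
      simp [hi]
    · refine Finset.sum_congr rfl fun i hi => ?_
      simp only [hX'def, addLeftEmbedding_apply]
      have h1' : ¬ (Y1 n ω + i < Y1 n ω) := by omega
      simp [h1']
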